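/- Let G be a directed graph and X, Y disjoint nonempty vertex sets. If S₁ and S₂ are X–Y separators, then both N⁺(R₁ ∪ R₂) and N⁺(R₁ ∩ R₂) are X–Y separators, where Rᵢ = R⁺(X, G\Sᵢ) is the set of vertices reachable from X in G \ Sᵢ. -/

import Mathlib

variable {V : Type*}

/-- A single edge step in `G \ S`: an edge of `E` with both endpoints outside `S`. -/
def DStep (E : V → V → Prop) (S : Set V) (a b : V) : Prop :=
  E a b ∧ a ∉ S ∧ b ∉ S

/-- `b` is reachable from `a` by a directed path in `G \ S`. -/
def DReach (E : V → V → Prop) (S : Set V) (a b : V) : Prop :=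
  Relation.ReflTransGen (DStep E S) a b

/-- The set of vertices reachable from the set `X` in `G \ S`. -/
def RSet (E : V → V → Prop) (S X : Set V) : Set V :=
  {v | ∃ x ∈ X, DReach E S x v}

/-- `S` is an `X`–`Y` separator: disjoint from `X ∪ Y` and destroying all `X → Y` paths. -/
def IsSep (E : V → V → Prop) (X Y S : Set V) : Prop :=
  S ∩ (X ∪ Y) = ∅ ∧ ∀ x ∈ X, ∀ y ∈ Y, ¬ DReach E S x y

/-- `S` is an inclusion-wise minimal `X`–`Y` separator. -/
def IsMinSep (E : V → V → Prop) (X Y S : Set V) : Prop :=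
  IsSep E X Y S ∧ ∀ S', S' ⊂ S → ¬ IsSep E X Y S'

/-- `S` is an important `X`–`Y` separator: a minimal separator such that no separator of at
most the same size has a strictly larger set of vertices reachable from `X`. -/
def IsImpSep (E : V → V → Prop) (X Y S : Set V) : Prop :=
  IsMinSep E X Y S ∧
    ¬ ∃ S', IsSep E X Y S' ∧ S'.ncard ≤ S.ncard ∧ RSet E S X ⊂ RSet E S' X

/-- `S` is a (vertex) multiway cut of `(G, T)`. -/
def IsMWC (E : V → V → Prop) (T S : Set V) : Prop :=
  S ∩ T = ∅ ∧ ∀ t₁ ∈ T, ∀ t₂ ∈ T, t₁ ≠ t₂ → ¬ DReach E S t₁ t₂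

/-- The forward shadow of `S` with respect to `T`: vertices outside `S ∪ T` not reachable
from `T` in `G \ S`. -/
def fShadow (E : V → V → Prop) (T S : Set V) : Set V :=
  {v | v ∉ S ∧ v ∉ T ∧ ∀ t ∈ T, ¬ DReach E S t v}

/-- The reverse shadow of `S` with respect to `T`: vertices outside `S ∪ T` that cannot
reach `T` in `G \ S`. -/
def rShadow (E : V → V → Prop) (T S : Set V) : Set V :=
  {v | v ∉ S ∧ v ∉ T ∧ ∀ t ∈ T, ¬ DReach E S v t}

/-- The adjacency of `torso(G, C)`: an edge `(a, b)` whenever `a, b ∈ C` and `G` has a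
directed `a → b` path whose internal vertices all lie outside `C`. -/
def TorsoAdj (E : V → V → Prop) (C : Set V) (a b : V) : Prop :=
  a ∈ C ∧ b ∈ C ∧ ∃ w, E a w ∧ Relation.ReflTransGen (fun x y => x ∉ C ∧ E x y) w b

/-- The out-neighborhood of a vertex set `A`. -/
def NOut (E : V → V → Prop) (A : Set V) : Set V :=
  {v | v ∉ A ∧ ∃ a ∈ A, E a v}


lemma rset_not_mem_sep {E : V → V → Prop} {X Y S : Set V} (h : IsSep E X Y S)
    {v : V} (hv : v ∈ RSet E S X) : v ∉ S := by
  obtain ⟨x, hx, hr⟩ := hv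
  induction hr with
  | refl => exact fun hxS => (Set.eq_empty_iff_forall_notMem.1 h.1 x) ⟨hxS, Or.inl hx⟩
  | tail _ hstep _ => exact hstep.2.2

lemma rset_step {E : V → V → Prop} {X S : Set V} {a b : V}
    (ha : a ∈ RSet E S X) (haS : a ∉ S) (hE : E a b) (hbS : b ∉ S) : b ∈ RSet E S X := by
  obtain ⟨x, hx, hr⟩ := ha
  exact ⟨x, hx, hr.tail ⟨hE, haS, hbS⟩⟩

lemma stay_in {E : V → V → Prop} {A : Set V} {a v : V}
    (ha : a ∈ A) (h : DReach E (NOut E A) a v) : v ∈ A := by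
  induction h with
  | refl => exact ha
  | tail _ hstep ih =>
    by_contra hc
    exact hstep.2.2 ⟨hc, _, ih, hstep.1⟩

/-- If `S₁, S₂` are `X`–`Y` separators then both `N⁺(R₁ ∪ R₂)` and
`N⁺(R₁ ∩ R₂)` are `X`–`Y` separators, where `Rᵢ` is the set of vertices reachable from `X`
in `G \ Sᵢ`. -/
theorem nout_of_reaches_is_separator (E : V → V → Prop) (X Y S₁ S₂ : Set V)
    (hX : X.Nonempty) (hY : Y.Nonempty) (hXY : Disjoint X Y)
    (h₁ : IsSep E X Y S₁) (h₂ : IsSep E X Y S₂) :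
    IsSep E X Y (NOut E (RSet E S₁ X ∪ RSet E S₂ X)) ∧
      IsSep E X Y (NOut E (RSet E S₁ X ∩ RSet E S₂ X)) := by
  have hXR1 : X ⊆ RSet E S₁ X := fun x hx => ⟨x, hx, Relation.ReflTransGen.refl⟩
  have hXR2 : X ⊆ RSet E S₂ X := fun x hx => ⟨x, hx, Relation.ReflTransGen.refl⟩
  have hYR1 : ∀ y ∈ Y, y ∉ RSet E S₁ X := fun y hy ⟨x, hx, hr⟩ => h₁.2 x hx y hy hr
  have hYR2 : ∀ y ∈ Y, y ∉ RSet E S₂ X := fun y hy ⟨x, hx, hr⟩ => h₂.2 x hx y hy hr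
  have key : ∀ A : Set V, NOut E A ⊆ S₁ ∪ S₂ → X ⊆ A → (∀ y ∈ Y, y ∉ A) →
      IsSep E X Y (NOut E A) := by
    intro A hsub hXA hYA
    constructor
    · apply Set.eq_empty_iff_forall_notMem.2
      rintro v ⟨hvN, hvXY⟩
      rcases hsub hvN with h | h
      · exact (Set.eq_empty_iff_forall_notMem.1 h₁.1 v) ⟨h, hvXY⟩
      · exact (Set.eq_empty_iff_forall_notMem.1 h₂.1 v) ⟨h, hvXY⟩
    · intro x hx y hy hr
      exact hYA y hy (stay_in (hXA hx) hr)
  constructor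
  · apply key
    · rintro v ⟨hvA, a, ha, hE⟩
      rcases ha with ha | ha
      · by_contra hv
        rw [Set.mem_union] at hv; push_neg at hv
        exact hvA (Or.inl (rset_step ha (rset_not_mem_sep h₁ ha) hE hv.1))
      · by_contra hv
        rw [Set.mem_union] at hv; push_neg at hv
        exact hvA (Or.inr (rset_step ha (rset_not_mem_sep h₂ ha) hE hv.2))
    · exact fun x hx => Or.inl (hXR1 hx)
    · exact fun y hy h => h.elim (hYR1 y hy) (hYR2 y hy)
  · apply key
    · rintro v ⟨hvA, a, ha, hE⟩
      by_contra hv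
      rw [Set.mem_union] at hv; push_neg at hv
      exact hvA ⟨rset_step ha.1 (rset_not_mem_sep h₁ ha.1) hE hv.1,
        rset_step ha.2 (rset_not_mem_sep h₂ ha.2) hE hv.2⟩
    · exact fun x hx => ⟨hXR1 hx, hXR2 hx⟩
    · exact fun y hy h => hYR1 y hy h.1
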